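/- Let m and n be odd integers with 3 ≤ m ≤ n < 2m. Then C_n decomposes C_m □ C_n. -/

import Mathlib

open SimpleGraph

section
variable {V : Type*} (G : SimpleGraph V) (n : ℕ) [NeZero n]

def cycSub (f : Fin n → V) (h : ∀ i, G.Adj (f i) (f (i+1))) : G.Subgraph where
  verts := Set.range f
  Adj a b := ∃ i, (a = f i ∧ b = f (i+1)) ∨ (b = f i ∧ a = f (i+1))
  adj_sub := by rintro a b ⟨i, ⟨rfl, rfl⟩|⟨rfl, rfl⟩⟩; exacts [h i, (h i).symm]
  edge_vert := by rintro a b ⟨i, ⟨rfl, rfl⟩|⟨rfl, rfl⟩⟩ <;> exact ⟨_, rfl⟩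
  symm := ⟨by rintro a b ⟨i, h'⟩; exact ⟨i, h'.symm⟩⟩

lemma cycSub_mem_edgeSet (f : Fin n → V) (h : ∀ i, G.Adj (f i) (f (i+1))) (a b : V) :
    s(a,b) ∈ (cycSub G n f h).edgeSet ↔
      ∃ i, (a = f i ∧ b = f (i+1)) ∨ (b = f i ∧ a = f (i+1)) := Iff.rfl

lemma cycSub_iso (hn : 3 ≤ n) (f : Fin n → V) (hf : Function.Injective f)
    (h : ∀ i, G.Adj (f i) (f (i+1))) :
    Nonempty ((cycSub G n f h).coe ≃g cycleGraph n) := by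
  obtain ⟨k, rfl⟩ : ∃ k, n = k + 2 := ⟨n - 2, by omega⟩
  refine ⟨Iso.symm ⟨Equiv.ofInjective f hf, ?_⟩⟩
  intro p q
  rw [Subgraph.coe_adj]
  show (cycSub G (k+2) f h).Adj (f p) (f q) ↔ (cycleGraph (k+2)).Adj p q
  rw [cycleGraph_adj]
  show (∃ i, (f p = f i ∧ f q = f (i+1)) ∨ (f q = f i ∧ f p = f (i+1))) ↔ _
  constructor
  · rintro ⟨i, ⟨ha, hb⟩|⟨hb, ha⟩⟩
    · right; rw [hf ha, hf hb]; abel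
    · left; rw [hf ha, hf hb]; abel
  · rintro (h1 | h1)
    · refine ⟨q, Or.inr ⟨rfl, congrArg f ?_⟩⟩
      rw [sub_eq_iff_eq_add] at h1; rw [h1]; exact add_comm _ _
    · refine ⟨p, Or.inl ⟨rfl, congrArg f ?_⟩⟩
      rw [sub_eq_iff_eq_add] at h1; rw [h1]; exact add_comm _ _

end

/- ============ nat core ============ -/
def zrow (T K : ℕ) : ℕ := if K < 2*T then 2*(K/4) + (if 2 ≤ K%4 then 1 else 0) else K - T
def zcol (T K : ℕ) : ℕ := if K < 2*T ∧ (K%4 = 1 ∨ K%4 = 2) then 1 else 0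

lemma mod2 {a N : ℕ} (h : a < 2*N) :
    (a % N = a ∧ a < N) ∨ (a % N + N = a ∧ N ≤ a) := by
  rcases Nat.lt_or_ge a N with h1 | h1
  · exact Or.inl ⟨Nat.mod_eq_of_lt h1, h1⟩
  · refine Or.inr ⟨?_, h1⟩
    rw [Nat.mod_eq_sub_mod h1, Nat.mod_eq_of_lt (by omega)]; omega

lemma mod_small {a N : ℕ} (h : a < 2*N) : a % N = if a < N then a else a - N := by
  split_ifs with h1
  · exact Nat.mod_eq_of_lt h1
  · rw [Nat.mod_eq_sub_mod (by omega)]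
    exact Nat.mod_eq_of_lt (by omega)

lemma zcol_le (T K : ℕ) : zcol T K ≤ 1 := by unfold zcol; split_ifs <;> omega

section core
variable {m n T : ℕ} (hTe : T % 2 = 0) (hTm : T < m) (hmT : m + T = n) (hm : 3 ≤ m)
include hTe hTm hmT hm

lemma zrow_lt {K : ℕ} (hK : K < n) : zrow T K < m := by
  unfold zrow; split_ifs <;> omega

lemma zrow_zcol_inj {K K' : ℕ} (hK : K < n) (hK' : K' < n)
    (h1 : zrow T K = zrow T K') (h2 : zcol T K = zcol T K') : K = K' := by
  unfold zrow zcol at *; split_ifs at * <;> omega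

lemma zig_step {K : ℕ} (hK : K < n) :
    (zrow T K = zrow T ((K+1) % n) ∧ zcol T K ≠ zcol T ((K+1) % n)) ∨
    (zcol T K = zcol T ((K+1) % n) ∧
      (zrow T ((K+1) % n) = zrow T K + 1 ∨ (zrow T K = m - 1 ∧ zrow T ((K+1) % n) = 0))) := by
  rw [mod_small (by omega)]
  unfold zrow zcol; split_ifs <;> omega

lemma horiz_iff {K : ℕ} (hK : K < n) :
    zrow T K = zrow T ((K+1) % n) ↔ (K < 2*T ∧ K % 2 = 0) := by
  have e := mod2 (a := K+1) (N := n) (by omega)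
  have h1 : (K+1) % n = if K + 1 < n then K+1 else 0 := by split_ifs <;> omega
  rw [h1]
  split_ifs with h2
  · unfold zrow; split_ifs <;> omega
  · unfold zrow; split_ifs <;> omega

lemma zrow_even_inj {K K' : ℕ} (hK : K < 2*T) (hK' : K' < 2*T)
    (he : K % 2 = 0) (he' : K' % 2 = 0) (h3 : zrow T K = zrow T K') : K = K' := by
  unfold zrow at h3; split_ifs at h3 <;> omega

lemma zrow_vert_inj {K K' : ℕ} (hK : K < n) (hK' : K' < n)
    (he : K % 2 = 1 ∨ 2*T ≤ K) (he' : K' % 2 = 1 ∨ 2*T ≤ K')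
    (h3 : zrow T K = zrow T K') : K = K' := by
  unfold zrow at h3; split_ifs at h3 <;> omega

lemma horiz_inj {K K' : ℕ} (hK : K < n) (hK' : K' < n)
    (h1 : zrow T K = zrow T ((K+1) % n)) (h2 : zrow T K' = zrow T ((K'+1) % n))
    (h3 : zrow T K = zrow T K') : K = K' := by
  rw [horiz_iff hTe hTm hmT hm hK] at h1
  rw [horiz_iff hTe hTm hmT hm hK'] at h2
  exact zrow_even_inj hTe hTm hmT hm h1.1 h2.1 h1.2 h2.2 h3

lemma vert_inj {K K' : ℕ} (hK : K < n) (hK' : K' < n)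
    (h1 : zrow T K ≠ zrow T ((K+1) % n)) (h2 : zrow T K' ≠ zrow T ((K'+1) % n))
    (h3 : zrow T K = zrow T K') : K = K' := by
  rw [ne_eq, horiz_iff hTe hTm hmT hm hK] at h1
  rw [ne_eq, horiz_iff hTe hTm hmT hm hK'] at h2
  exact zrow_vert_inj hTe hTm hmT hm hK hK' (by omega) (by omega) h3

lemma horiz_lt_T {K : ℕ} (hK : K < n) (h1 : zrow T K = zrow T ((K+1) % n)) :
    zrow T K < T := by
  rw [horiz_iff hTe hTm hmT hm hK] at h1
  unfold zrow; split_ifs <;> omega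

lemma zrow_two (i : ℕ) (hi : i ≤ T) : zrow T (2*i) = i := by
  unfold zrow; split_ifs <;> omega

lemma zrow_two1 (i : ℕ) (hi : i < T) : zrow T (2*i+1) = i := by
  unfold zrow; split_ifs <;> omega

lemma zrow_reg2 (i : ℕ) (hi : T ≤ i) (hi2 : i < m) : zrow T (i + T) = i := by
  unfold zrow; split_ifs <;> omega

end core

/- ============ Fin lemmas ============ -/

lemma cyc_adj_val {N : ℕ} (h3 : 3 ≤ N) (u v : Fin N) :
    (cycleGraph N).Adj u v ↔ (v.val = u.val + 1 ∨ u.val = v.val + 1 ∨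
      (u.val = N-1 ∧ v.val = 0) ∨ (v.val = N-1 ∧ u.val = 0)) := by
  obtain ⟨k, rfl⟩ : ∃ k, N = k + 2 := ⟨N - 2, by omega⟩
  rw [cycleGraph_adj]
  rw [Fin.ext_iff, Fin.ext_iff, Fin.sub_def, Fin.sub_def]
  have hu := u.isLt; have hv := v.isLt
  simp only [Fin.val_one']
  have h1 : 1 % (k+1+1) = 1 := Nat.mod_eq_of_lt (by omega)
  have e1 := mod2 (a := k+2 - v.val + u.val) (N := k+2) (by omega)
  have e2 := mod2 (a := k+2 - u.val + v.val) (N := k+2) (by omega)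
  show (k+2 - v.val + u.val) % (k+2) = 1 % (k+1+1) ∨ (k+2 - u.val + v.val) % (k+2) = 1 % (k+1+1) ↔ _
  omega

lemma val_add_one_mod {N : ℕ} [NeZero N] (k : Fin N) : (k + 1).val = (k.val + 1) % N := by
  rw [Fin.add_def]
  show (k.val + (1:Fin N).val) % N = (k.val + 1) % N
  rw [Fin.val_one', Nat.add_mod_mod]

/- ============ the cycle maps ============ -/

def zigV (m n T : ℕ) [NeZero m] [NeZero n] (j k : Fin n) : Fin m × Fin n :=
  (⟨zrow T k.val % m, Nat.mod_lt _ (Nat.pos_of_ne_zero (NeZero.ne m))⟩,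
   ⟨(j.val + zcol T k.val) % n, Nat.mod_lt _ (Nat.pos_of_ne_zero (NeZero.ne n))⟩)

def rowV (m n : ℕ) (r : Fin m) (k : Fin n) : Fin m × Fin n := (r, k)

section fin
variable {m n T : ℕ} [NeZero m] [NeZero n]
  (hTe : T % 2 = 0) (hTm : T < m) (hmT : m + T = n) (hm : 3 ≤ m)

lemma hn3 (hTm : T < m) (hmT : m + T = n) (hm : 3 ≤ m) : 3 ≤ n := by omega

include hTe hTm hmT hm

set_option maxHeartbeats 1000000 in
lemma zig_adj (j k : Fin n) :
    (cycleGraph m □ cycleGraph n).Adj (zigV m n T j k) (zigV m n T j (k+1)) := by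
  have hK := k.isLt
  have hj := j.isLt
  have hv1 : (k+1).val = (k.val + 1) % n := val_add_one_mod k
  rw [boxProd_adj]
  simp only [zigV, cyc_adj_val hm, cyc_adj_val (hn3 hTm hmT hm), Fin.ext_iff, hv1]
  have r1 : zrow T k.val % m = zrow T k.val :=
    Nat.mod_eq_of_lt (zrow_lt hTe hTm hmT hm hK)
  have r2 : zrow T ((k.val+1) % n) % m = zrow T ((k.val+1) % n) :=
    Nat.mod_eq_of_lt (zrow_lt hTe hTm hmT hm (Nat.mod_lt _ (by omega)))
  have c1 := zcol_le T k.val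
  have c2 := zcol_le T ((k.val+1) % n)
  have m1 := mod2 (a := j.val + zcol T k.val) (N := n) (by omega)
  have m2 := mod2 (a := j.val + zcol T ((k.val+1) % n)) (N := n) (by omega)
  have hs := zig_step hTe hTm hmT hm hK
  omega

lemma zig_injective (j : Fin n) : Function.Injective (zigV m n T j) := by
  intro k k' h
  have hj := j.isLt
  rw [Prod.ext_iff] at h
  obtain ⟨h1, h2⟩ := h
  rw [Fin.ext_iff] at h1 h2
  simp only [zigV] at h1 h2
  have r1 : zrow T k.val % m = zrow T k.val :=
    Nat.mod_eq_of_lt (zrow_lt hTe hTm hmT hm k.isLt)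
  have r2 : zrow T k'.val % m = zrow T k'.val :=
    Nat.mod_eq_of_lt (zrow_lt hTe hTm hmT hm k'.isLt)
  have c1 := zcol_le T k.val
  have c2 := zcol_le T k'.val
  have m1 := mod2 (a := j.val + zcol T k.val) (N := n) (by omega)
  have m2 := mod2 (a := j.val + zcol T k'.val) (N := n) (by omega)
  have hr : zrow T k.val = zrow T k'.val := by omega
  have hc : zcol T k.val = zcol T k'.val := by omega
  exact Fin.ext (zrow_zcol_inj hTe hTm hmT hm k.isLt k'.isLt hr hc)

lemma row_adj (r : Fin m) (k : Fin n) :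
    (cycleGraph m □ cycleGraph n).Adj (rowV m n r k) (rowV m n r (k+1)) := by
  have hK := k.isLt
  have hv1 : (k+1).val = (k.val + 1) % n := val_add_one_mod k
  rw [boxProd_adj]
  simp only [rowV, cyc_adj_val (hn3 hTm hmT hm), Fin.ext_iff, hv1]
  have m1 := mod2 (a := k.val + 1) (N := n) (by omega)
  right
  constructor
  · omega
  · trivial

lemma row_injective (r : Fin m) : Function.Injective (rowV m n r) :=
  fun _ _ h => congrArg Prod.snd h

end fin

section cover
variable {m n T : ℕ} [NeZero m] [NeZero n]
  (hTe : T % 2 = 0) (hTm : T < m) (hmT : m + T = n) (hm : 3 ≤ m)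
include hTe hTm hmT hm

lemma horiz_mem_row (i : Fin m) (x y : Fin n) (hxy : y.val = (x.val+1) % n) :
    ∃ k : Fin n, ((i,x) = rowV m n i k ∧ (i,y) = rowV m n i (k+1)) ∨
      ((i,y) = rowV m n i k ∧ (i,x) = rowV m n i (k+1)) := by
  refine ⟨x, Or.inl ⟨rfl, ?_⟩⟩
  rw [Prod.ext_iff]
  refine ⟨rfl, Fin.ext ?_⟩
  show (y : ℕ) = ((x+1 : Fin n) : ℕ)
  rw [val_add_one_mod]; exact hxy

lemma horiz_mem_zig (i : Fin m) (hi : i.val < T) (x y : Fin n) (hxy : y.val = (x.val+1) % n) :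
    ∃ k : Fin n, ((i,x) = zigV m n T x k ∧ (i,y) = zigV m n T x (k+1)) ∨
      ((i,y) = zigV m n T x k ∧ (i,x) = zigV m n T x (k+1)) := by
  have hx := x.isLt
  have h2i : 2*i.val + 1 < n := by omega
  refine ⟨⟨2*i.val, by omega⟩, ?_⟩
  have hk1 : ((⟨2*i.val, by omega⟩ : Fin n) + 1).val = 2*i.val+1 := by
    rw [val_add_one_mod]; exact Nat.mod_eq_of_lt h2i
  have hr0 : zrow T (2*i.val) = i.val := zrow_two hTe hTm hmT hm _ (by omega)
  have hr1 : zrow T (2*i.val+1) = i.val := zrow_two1 hTe hTm hmT hm _ hi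
  have hr0m : zrow T (2*i.val) % m = zrow T (2*i.val) := Nat.mod_eq_of_lt (by omega)
  have hr1m : zrow T (2*i.val+1) % m = zrow T (2*i.val+1) := Nat.mod_eq_of_lt (by omega)
  have m0 := mod2 (a := x.val + zcol T (2*i.val)) (N := n) (by have := zcol_le T (2*i.val); omega)
  have m1 := mod2 (a := x.val + zcol T (2*i.val+1)) (N := n) (by have := zcol_le T (2*i.val+1); omega)
  have m2 := mod2 (a := x.val + 1) (N := n) (by omega)
  by_cases hp : i.val % 2 = 0
  · have hzc0 : zcol T (2*i.val) = 0 := by unfold zcol; split_ifs <;> omega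
    have hzc1 : zcol T (2*i.val+1) = 1 := by unfold zcol; split_ifs <;> omega
    left
    simp only [zigV, Prod.ext_iff, Fin.ext_iff, hk1]
    refine ⟨⟨?_, ?_⟩, ?_, ?_⟩ <;> omega
  · have hzc0 : zcol T (2*i.val) = 1 := by unfold zcol; split_ifs <;> omega
    have hzc1 : zcol T (2*i.val+1) = 0 := by unfold zcol; split_ifs <;> omega
    right
    simp only [zigV, Prod.ext_iff, Fin.ext_iff, hk1]
    refine ⟨⟨?_, ?_⟩, ?_, ?_⟩ <;> omega

lemma vert_mem (x y : Fin m) (c : Fin n) (hxy : y.val = (x.val+1) % m) :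
    ∃ j : Fin n, ∃ k : Fin n, ((x,c) = zigV m n T j k ∧ (y,c) = zigV m n T j (k+1)) ∨
      ((y,c) = zigV m n T j k ∧ (x,c) = zigV m n T j (k+1)) := by
  have hx := x.isLt
  have hc := c.isLt
  have hxm : x.val % m = x.val := Nat.mod_eq_of_lt x.isLt
  have hym : y.val % m = y.val := Nat.mod_eq_of_lt y.isLt
  have hcn : c.val % n = c.val := Nat.mod_eq_of_lt c.isLt
  rcases Nat.lt_or_ge x.val T with hiT | hiT
  · -- region 1 : k = 2i+1
    have h2i : 2*x.val + 2 ≤ 2*T := by omega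
    have hkv : 2*x.val + 1 < n := by omega
    have hr1 : zrow T (2*x.val+1) = x.val := zrow_two1 hTe hTm hmT hm _ hiT
    have hr2 : zrow T (2*x.val+2) = x.val + 1 := by
      have : 2*x.val+2 = 2*(x.val+1) := by ring
      rw [this]; exact zrow_two hTe hTm hmT hm _ (by omega)
    have hr1m : zrow T (2*x.val+1) % m = zrow T (2*x.val+1) := Nat.mod_eq_of_lt (by omega)
    have hr2m : zrow T (2*x.val+2) % m = zrow T (2*x.val+2) := Nat.mod_eq_of_lt (by omega)
    have hyv : y.val = x.val + 1 := by
      have := mod2 (a := x.val + 1) (N := m) (by omega); omega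
    have hx1m : (x.val+1) % m = x.val+1 := Nat.mod_eq_of_lt (by omega)
    refine ⟨if x.val % 2 = 0 then ⟨(c.val + n - 1) % n, Nat.mod_lt _ (by omega)⟩ else c,
      ⟨2*x.val+1, hkv⟩, Or.inl ?_⟩
    have hself : ((⟨2*x.val+1, hkv⟩ : Fin n) : ℕ) = 2*x.val+1 := rfl
    have hk1 : ((⟨2*x.val+1, hkv⟩ : Fin n) + 1).val = 2*x.val+2 := by
      rw [val_add_one_mod, hself]; exact Nat.mod_eq_of_lt (by omega)
    by_cases hp : x.val % 2 = 0
    · have hzc1 : zcol T (2*x.val+1) = 1 := by unfold zcol; split_ifs <;> omega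
      have hzc2 : zcol T (2*x.val+2) = 1 := by unfold zcol; split_ifs <;> omega
      simp only [hp, if_pos, zigV, Prod.ext_iff, Fin.ext_iff, hself, hk1, hzc1, hzc2, hr1, hr2,
        hr1m, hr2m]
      have mj := mod2 (a := c.val + n - 1) (N := n) (by omega)
      have mj1 := mod2 (a := (c.val + n - 1) % n + 1) (N := n) (by omega)
      have mjmk : ((⟨(c.val + n - 1) % n, Nat.mod_lt _ (by omega : 0 < n)⟩ : Fin n) : ℕ)
          = (c.val + n - 1) % n := rfl
      refine ⟨⟨?_, ?_⟩, ?_, ?_⟩ <;> (try simp only [mjmk]) <;> omega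
    · have hzc1 : zcol T (2*x.val+1) = 0 := by unfold zcol; split_ifs <;> omega
      have hzc2 : zcol T (2*x.val+2) = 0 := by unfold zcol; split_ifs <;> omega
      simp only [hp, if_neg, if_false, zigV, Prod.ext_iff, Fin.ext_iff, hself, hk1, hzc1, hzc2,
        hr1, hr2, hr1m, hr2m, Nat.add_zero]
      have mc := mod2 (a := c.val) (N := n) (by omega)
      refine ⟨⟨?_, ?_⟩, ?_, ?_⟩ <;> omega
  · -- region 2 : k = i + T
    have hkv : x.val + T < n := by omega
    have hr1 : zrow T (x.val + T) = x.val := zrow_reg2 hTe hTm hmT hm _ hiT hx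
    have hr1m : zrow T (x.val+T) % m = zrow T (x.val+T) := Nat.mod_eq_of_lt (by omega)
    have hzc1 : zcol T (x.val+T) = 0 := by unfold zcol; split_ifs <;> omega
    refine ⟨c, ⟨x.val + T, hkv⟩, Or.inl ?_⟩
    have hk1 : ((⟨x.val+T, hkv⟩ : Fin n) + 1).val = (x.val+T+1) % n := val_add_one_mod _
    have mk1 := mod2 (a := x.val + T + 1) (N := n) (by omega)
    have hr2 : zrow T ((x.val+T+1) % n) = y.val := by
      have hy2 := mod2 (a := x.val + 1) (N := m) (by omega)
      rcases mk1 with ⟨e, l⟩ | ⟨e, l⟩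
      · rw [e]
        have : x.val + T + 1 = (x.val+1) + T := by ring
        rw [this]; rw [zrow_reg2 hTe hTm hmT hm _ (by omega) (by omega)]; omega
      · have e0 : (x.val + T + 1) % n = 0 := by omega
        rw [e0]
        have : zrow T 0 = 0 := by unfold zrow; split_ifs <;> omega
        omega
    have hr2m : zrow T ((x.val+T+1) % n) % m = zrow T ((x.val+T+1) % n) :=
      Nat.mod_eq_of_lt (by omega)
    have hzc2 : zcol T ((x.val+T+1) % n) = 0 := by
      unfold zcol; split_ifs with h1 <;> omega
    have mc := mod2 (a := c.val) (N := n) (by omega)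
    have hself : ((⟨x.val+T, hkv⟩ : Fin n) : ℕ) = x.val+T := rfl
    simp only [zigV, Prod.ext_iff, Fin.ext_iff, hself, hk1, hzc1, hzc2, hr1, hr2, hr1m, hr2m,
      Nat.add_zero]
    refine ⟨⟨?_, ?_⟩, ?_, ?_⟩ <;> omega

end cover

section uniq
variable {m n T : ℕ} [NeZero m] [NeZero n]
  (hTe : T % 2 = 0) (hTm : T < m) (hmT : m + T = n) (hm : 3 ≤ m)
include hTe hTm hmT hm

lemma zigV_eq_vals {j j' k k' : Fin n} (h : zigV m n T j k = zigV m n T j' k') :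
    zrow T k.val = zrow T k'.val ∧
      (j.val + zcol T k.val) % n = (j'.val + zcol T k'.val) % n := by
  rw [Prod.ext_iff] at h
  obtain ⟨h1, h2⟩ := h
  have h1' := congrArg Fin.val h1
  have h2' := congrArg Fin.val h2
  simp only [zigV] at h1' h2'
  rw [Nat.mod_eq_of_lt (zrow_lt hTe hTm hmT hm k.isLt),
    Nat.mod_eq_of_lt (zrow_lt hTe hTm hmT hm k'.isLt)] at h1'
  exact ⟨h1', h2'⟩

lemma zig_zig_eq (j j' k k' : Fin n)
    (h : (zigV m n T j k = zigV m n T j' k' ∧ zigV m n T j (k+1) = zigV m n T j' (k'+1)) ∨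
         (zigV m n T j k = zigV m n T j' (k'+1) ∧ zigV m n T j (k+1) = zigV m n T j' k')) :
    j = j' := by
  have hK := k.isLt; have hK' := k'.isLt
  have hj := j.isLt; have hj' := j'.isLt
  have hv : (k+1).val = (k.val+1) % n := val_add_one_mod k
  have hv' : (k'+1).val = (k'.val+1) % n := val_add_one_mod k'
  have hs := zig_step hTe hTm hmT hm hK
  have hs' := zig_step hTe hTm hmT hm hK'
  have hc1 := zcol_le T k.val
  have hc2 := zcol_le T ((k.val+1) % n)
  have hc1' := zcol_le T k'.val
  have hc2' := zcol_le T ((k'.val+1) % n)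
  have m1 := mod2 (a := j.val + zcol T k.val) (N := n) (by omega)
  have m2 := mod2 (a := j.val + zcol T ((k.val+1) % n)) (N := n) (by omega)
  have m1' := mod2 (a := j'.val + zcol T k'.val) (N := n) (by omega)
  have m2' := mod2 (a := j'.val + zcol T ((k'.val+1) % n)) (N := n) (by omega)
  rcases h with ⟨e1, e2⟩ | ⟨e1, e2⟩
  · obtain ⟨r1, c1⟩ := zigV_eq_vals hTe hTm hmT hm e1
    obtain ⟨r2, c2⟩ := zigV_eq_vals hTe hTm hmT hm e2
    rw [hv, hv'] at r2 c2
    by_cases hh : zrow T k.val = zrow T ((k.val+1) % n)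
    · have hh' : zrow T k'.val = zrow T ((k'.val+1) % n) := by omega
      have hKK : k.val = k'.val := horiz_inj hTe hTm hmT hm hK hK' hh hh' r1
      rw [hKK] at c1 m1 m2 hc1 hc2
      exact Fin.ext (by omega)
    · have hh' : zrow T k'.val ≠ zrow T ((k'.val+1) % n) := by omega
      have hKK : k.val = k'.val := vert_inj hTe hTm hmT hm hK hK' hh hh' r1
      rw [hKK] at c1 m1 m2 hc1 hc2
      exact Fin.ext (by omega)
  · obtain ⟨r1, c1⟩ := zigV_eq_vals hTe hTm hmT hm e1
    obtain ⟨r2, c2⟩ := zigV_eq_vals hTe hTm hmT hm e2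
    rw [hv'] at r1 c1
    rw [hv] at r2 c2
    exfalso
    by_cases hh : zrow T k.val = zrow T ((k.val+1) % n)
    · have hh' : zrow T k'.val = zrow T ((k'.val+1) % n) := by omega
      have hKK : k.val = k'.val := horiz_inj hTe hTm hmT hm hK hK' hh hh'
        (by omega)
      rw [hKK] at c1 c2 hh hs m1 m2 hc1 hc2
      omega
    · omega

lemma row_zig_false (r : Fin m) (hr : T ≤ r.val) (i : Fin n) (j k : Fin n)
    (a b : Fin m × Fin n)
    (h1 : (a = rowV m n r i ∧ b = rowV m n r (i+1)) ∨
          (b = rowV m n r i ∧ a = rowV m n r (i+1)))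
    (h2 : (a = zigV m n T j k ∧ b = zigV m n T j (k+1)) ∨
          (b = zigV m n T j k ∧ a = zigV m n T j (k+1))) : False := by
  have ha1 : a.1 = r := by
    rcases h1 with ⟨ha, _⟩ | ⟨_, ha⟩ <;> rw [ha] <;> rfl
  have hb1 : b.1 = r := by
    rcases h1 with ⟨_, hb⟩ | ⟨hb, _⟩ <;> rw [hb] <;> rfl
  have key : ∀ (kk : Fin n) (v : Fin m × Fin n),
      v = zigV m n T j kk → v.1 = r → zrow T kk.val % m = r.val := by
    intro kk v hv hv1
    have h3 := congrArg (fun p => ((p.1 : Fin m) : ℕ)) hv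
    simp only [zigV] at h3
    rw [hv1] at h3
    exact h3.symm
  have hz1 : zrow T k.val % m = r.val := by
    rcases h2 with ⟨ha, _⟩ | ⟨hb, _⟩
    · exact key k a ha ha1
    · exact key k b hb hb1
  have hz2 : zrow T (k+1).val % m = r.val := by
    rcases h2 with ⟨_, hb⟩ | ⟨_, ha⟩
    · exact key (k+1) b hb hb1
    · exact key (k+1) a ha ha1
  rw [val_add_one_mod] at hz2
  have l1 : zrow T k.val < m := zrow_lt hTe hTm hmT hm k.isLt
  have l2 : zrow T ((k.val+1) % n) < m := zrow_lt hTe hTm hmT hm (Nat.mod_lt _ (by omega))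
  have s1 : zrow T k.val % m = zrow T k.val := Nat.mod_eq_of_lt l1
  have s2 : zrow T ((k.val+1) % n) % m = zrow T ((k.val+1) % n) := Nat.mod_eq_of_lt l2
  have hlt := horiz_lt_T hTe hTm hmT hm k.isLt (by omega)
  omega

end uniq


/-- `D` is a decomposition of the graph `G` into copies of the cycle graph `C_k`:
every subgraph in `D` is isomorphic to `C_k`, and every edge of `G` lies in the
edge set of exactly one member of `D`. -/
def IsCycleDecomposition {V : Type*} (G : SimpleGraph V) (k : ℕ)
    (D : Set G.Subgraph) : Prop :=
  (∀ H ∈ D, Nonempty (H.coe ≃g cycleGraph k)) ∧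
  ∀ e ∈ G.edgeSet, ∃! H : D, e ∈ (H : G.Subgraph).edgeSet

/-- The cycle `C_k` decomposes the graph `G`. -/
def CycleDecomposes (k : ℕ) {V : Type*} (G : SimpleGraph V) : Prop :=
  ∃ D : Set G.Subgraph, IsCycleDecomposition G k D

theorem cn_decomposes_torus_of_odd (m n : ℕ) (hmo : Odd m) (hno : Odd n)
    (hm : 3 ≤ m) (hmn : m ≤ n) (hn2m : n < 2 * m) :
    CycleDecomposes n (cycleGraph m □ cycleGraph n) := by
  haveI : NeZero m := ⟨by omega⟩
  haveI : NeZero n := ⟨by omega⟩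
  have hm2 : m % 2 = 1 := Nat.odd_iff.mp hmo
  have hn2 : n % 2 = 1 := Nat.odd_iff.mp hno
  obtain ⟨T, hTdef⟩ : ∃ T, T = n - m := ⟨n - m, rfl⟩
  have hTe : T % 2 = 0 := by omega
  have hTm : T < m := by omega
  have hmT : m + T = n := by omega
  have hn3 : 3 ≤ n := by omega
  have hzadj : ∀ j k : Fin n,
      (cycleGraph m □ cycleGraph n).Adj (zigV m n T j k) (zigV m n T j (k+1)) :=
    fun j k => zig_adj hTe hTm hmT hm j k
  have hradj : ∀ (r : Fin m) (k : Fin n),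
      (cycleGraph m □ cycleGraph n).Adj (rowV m n r k) (rowV m n r (k+1)) :=
    fun r k => row_adj hTe hTm hmT hm r k
  refine ⟨{H | (∃ r : Fin m, T ≤ r.val ∧ H = cycSub _ n (rowV m n r) (hradj r)) ∨
      (∃ j : Fin n, H = cycSub _ n (zigV m n T j) (hzadj j))}, ?_, ?_⟩
  · rintro H (⟨r, hr, rfl⟩ | ⟨j, rfl⟩)
    · exact cycSub_iso _ n hn3 _ (row_injective hTe hTm hmT hm r) _
    · exact cycSub_iso _ n hn3 _ (zig_injective hTe hTm hmT hm j) _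
  · intro e he
    induction e using Sym2.ind with
    | _ a b =>
      have hadj : (cycleGraph m □ cycleGraph n).Adj a b := he
      obtain ⟨a1, a2⟩ := a
      obtain ⟨b1, b2⟩ := b
      rw [boxProd_adj] at hadj
      dsimp only at hadj
      have main : (∃ r : Fin m, T ≤ r.val ∧ ∃ k : Fin n,
            (((a1,a2) = rowV m n r k ∧ (b1,b2) = rowV m n r (k+1)) ∨
             ((b1,b2) = rowV m n r k ∧ (a1,a2) = rowV m n r (k+1)))) ∨
          (∃ j : Fin n, ∃ k : Fin n,
            (((a1,a2) = zigV m n T j k ∧ (b1,b2) = zigV m n T j (k+1)) ∨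
             ((b1,b2) = zigV m n T j k ∧ (a1,a2) = zigV m n T j (k+1)))) := by
        rcases hadj with ⟨hA, hEq⟩ | ⟨hA, hEq⟩
        · -- vertical edge
          have hEq' : a2 = b2 := hEq
          subst hEq'
          right
          rw [cyc_adj_val hm] at hA
          rcases hA with h | h | ⟨h1, h2⟩ | ⟨h1, h2⟩
          · exact vert_mem hTe hTm hmT hm a1 b1 a2
              (by rw [Nat.mod_eq_of_lt (show a1.val+1 < m by omega)]; omega)
          · obtain ⟨j, k, hp⟩ := vert_mem hTe hTm hmT hm b1 a1 a2
              (by rw [Nat.mod_eq_of_lt (show b1.val+1 < m by omega)]; omega)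
            exact ⟨j, k, hp.symm⟩
          · exact vert_mem hTe hTm hmT hm a1 b1 a2
              (by have e : a1.val+1 = m := by omega
                  rw [e, Nat.mod_self]; omega)
          · obtain ⟨j, k, hp⟩ := vert_mem hTe hTm hmT hm b1 a1 a2
              (by have e : b1.val+1 = m := by omega
                  rw [e, Nat.mod_self]; omega)
            exact ⟨j, k, hp.symm⟩
        · -- horizontal edge
          have hEq' : a1 = b1 := hEq
          subst hEq'
          rw [cyc_adj_val hn3] at hA
          rcases Nat.lt_or_ge a1.val T with hiT | hiT
          · right
            rcases hA with h | h | ⟨h1, h2⟩ | ⟨h1, h2⟩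
            · obtain ⟨k, hp⟩ := horiz_mem_zig hTe hTm hmT hm a1 hiT a2 b2
                (by rw [Nat.mod_eq_of_lt (show a2.val+1 < n by omega)]; omega)
              exact ⟨a2, k, hp⟩
            · obtain ⟨k, hp⟩ := horiz_mem_zig hTe hTm hmT hm a1 hiT b2 a2
                (by rw [Nat.mod_eq_of_lt (show b2.val+1 < n by omega)]; omega)
              exact ⟨b2, k, hp.symm⟩
            · obtain ⟨k, hp⟩ := horiz_mem_zig hTe hTm hmT hm a1 hiT a2 b2
                (by have e : a2.val+1 = n := by omega
                    rw [e, Nat.mod_self]; omega)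
              exact ⟨a2, k, hp⟩
            · obtain ⟨k, hp⟩ := horiz_mem_zig hTe hTm hmT hm a1 hiT b2 a2
                (by have e : b2.val+1 = n := by omega
                    rw [e, Nat.mod_self]; omega)
              exact ⟨b2, k, hp.symm⟩
          · left
            refine ⟨a1, hiT, ?_⟩
            rcases hA with h | h | ⟨h1, h2⟩ | ⟨h1, h2⟩
            · exact horiz_mem_row hTe hTm hmT hm a1 a2 b2
                (by rw [Nat.mod_eq_of_lt (show a2.val+1 < n by omega)]; omega)
            · obtain ⟨k, hp⟩ := horiz_mem_row hTe hTm hmT hm a1 b2 a2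
                (by rw [Nat.mod_eq_of_lt (show b2.val+1 < n by omega)]; omega)
              exact ⟨k, hp.symm⟩
            · exact horiz_mem_row hTe hTm hmT hm a1 a2 b2
                (by have e : a2.val+1 = n := by omega
                    rw [e, Nat.mod_self]; omega)
            · obtain ⟨k, hp⟩ := horiz_mem_row hTe hTm hmT hm a1 b2 a2
                (by have e : b2.val+1 = n := by omega
                    rw [e, Nat.mod_self]; omega)
              exact ⟨k, hp.symm⟩
      rcases main with ⟨r, hr, hk⟩ | ⟨j, k0, hk⟩
      · refine ⟨⟨cycSub _ n (rowV m n r) (hradj r), Or.inl ⟨r, hr, rfl⟩⟩, hk, ?_⟩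
        rintro ⟨H', hD'⟩ hmem'
        apply Subtype.ext
        rcases hD' with ⟨r', hr', rfl⟩ | ⟨j', rfl⟩
        · obtain ⟨i', hp'⟩ := hmem'
          obtain ⟨i, hp⟩ := hk
          have e1 : a1 = r := by
            rcases hp with ⟨h, _⟩ | ⟨_, h⟩ <;> exact congrArg Prod.fst h
          have e2 : a1 = r' := by
            rcases hp' with ⟨h, _⟩ | ⟨_, h⟩ <;> exact congrArg Prod.fst h
          have e3 : r' = r := by rw [← e1, e2]
          subst e3
          rfl
        · obtain ⟨i, hp⟩ := hk
          obtain ⟨k', hp'⟩ := hmem'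
          exact (row_zig_false hTe hTm hmT hm r hr i j' k' _ _ hp hp').elim
      · refine ⟨⟨cycSub _ n (zigV m n T j) (hzadj j), Or.inr ⟨j, rfl⟩⟩, ⟨k0, hk⟩, ?_⟩
        rintro ⟨H', hD'⟩ hmem'
        apply Subtype.ext
        rcases hD' with ⟨r', hr', rfl⟩ | ⟨j', rfl⟩
        · obtain ⟨i', hp'⟩ := hmem'
          exact (row_zig_false hTe hTm hmT hm r' hr' i' j k0 _ _ hp' hk).elim
        · obtain ⟨k', hp'⟩ := hmem'
          have hjj : j' = j := by
            apply zig_zig_eq hTe hTm hmT hm j' j k' k0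
            rcases hp' with ⟨h1', h2'⟩ | ⟨h1', h2'⟩ <;>
              rcases hk with ⟨h1, h2⟩ | ⟨h1, h2⟩
            · exact Or.inl ⟨h1'.symm.trans h1, h2'.symm.trans h2⟩
            · exact Or.inr ⟨h1'.symm.trans h2, h2'.symm.trans h1⟩
            · exact Or.inr ⟨h1'.symm.trans h2, h2'.symm.trans h1⟩
            · exact Or.inl ⟨h1'.symm.trans h1, h2'.symm.trans h2⟩
          subst hjj
          rfl
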